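/- Let 0 = x₁ < x₂ < x₃ = 1 and 0 = y₁ < y₂ < y₃. If there exists a C¹ increasing homeomorphism ω of the extended real line, piecewise Möbius with breakpoints only at ∞, 0, x₂, 1, fixing ∞, with ω'(∞) = 1 (i.e., ω(x) = x + const for x < 0 and x > 1), and ω(x_j) = y_j for j = 1,2,3, then x₂ = y₂/y₃. Consequently the cross-ratio of (∞, 0, x₂, 1) equals the cross-ratio of (∞, 0, y₂, y₃). -/

import Mathlib

open Filter Set Topology

private lemma exists_small_t (ε D R M : ℝ) (hε : 0 < ε) (hD : 0 < D) (hR : 0 < R) :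
    ∃ t : ℝ, 0 < t ∧ t < ε ∧ M < D / (R * t) := by
  refine ⟨min (ε/2) (D/(R*(|M|+1))), ?_, ?_, ?_⟩
  · have h1 : 0 < ε/2 := by linarith
    have h2 : 0 < D/(R*(|M|+1)) := by positivity
    exact lt_min h1 h2
  · exact lt_of_le_of_lt (min_le_left _ _) (by linarith)
  · set t := min (ε/2) (D/(R*(|M|+1))) with ht
    have ht0 : 0 < t := by
      have h2 : 0 < D/(R*(|M|+1)) := by positivity
      exact lt_min (by linarith) h2
    have htle : t ≤ D/(R*(|M|+1)) := min_le_right _ _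
    have hM1 : (0:ℝ) < |M| + 1 := by positivity
    have h3 : R * t ≤ D/(|M|+1) := by
      have := mul_le_mul_of_nonneg_left htle (le_of_lt hR)
      calc R * t ≤ R * (D/(R*(|M|+1))) := this
        _ = D/(|M|+1) := by field_simp
    have h4 : |M| + 1 ≤ D / (R * t) := by
      rw [le_div_iff₀ (by positivity)]
      calc (|M|+1) * (R*t) ≤ (|M|+1) * (D/(|M|+1)) :=
            mul_le_mul_of_nonneg_left h3 (le_of_lt hM1)
        _ = D := by field_simp
    have : M ≤ |M| := le_abs_self M
    linarith

private lemma mobius_piece (ω : ℝ → ℝ) (hmono : StrictMono ω) (hC1 : ContDiff ℝ 1 ω)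
    (a b p q r s : ℝ) (hab : a < b) (hD : 0 < p*s - q*r)
    (h : ∀ x ∈ Set.Ioo a b, r*x+s ≠ 0 ∧ ω x = (p*x+q)/(r*x+s)) :
    (ω b - ω a)^2 = deriv ω a * deriv ω b * (b-a)^2 := by
  set D := p*s - q*r with hDdef
  -- r ≠ 0 or interior denominators handle; first, endpoint denominators nonzero
  have hra : r*a+s ≠ 0 := by
    intro h0
    have hr : r ≠ 0 := by
      intro hr0
      have hs : s = 0 := by rw [hr0] at h0; linarith
      have hx : (a+b)/2 ∈ Set.Ioo a b := ⟨by linarith, by linarith⟩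
      exact (h _ hx).1 (by rw [hr0, hs]; ring)
    have hs : s = -(r*a) := by linarith
    obtain ⟨t, ht0, htε, htM⟩ := exists_small_t (b-a) D (r^2) (p/r - ω a)
      (by linarith) hD (by positivity)
    have hx : a + t ∈ Set.Ioo a b := ⟨by linarith, by linarith⟩
    have hval := (h _ hx).2
    have hden : r*(a+t)+s = r*t := by rw [hs]; ring
    have hnum : p*(a+t)+q = p*t - D/r := by
      have hq : r*(p*a+q) = -D := by rw [hDdef, hs]; ring
      field_simp
      nlinarith [hq]
    have hω : ω (a+t) = p/r - D/(r^2*t) := by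
      rw [hval, hden, hnum]
      field_simp
    have h1 : ω a < ω (a+t) := hmono (by linarith)
    rw [hω] at h1
    linarith
  have hrb : r*b+s ≠ 0 := by
    intro h0
    have hr : r ≠ 0 := by
      intro hr0
      have hs : s = 0 := by rw [hr0] at h0; linarith
      have hx : (a+b)/2 ∈ Set.Ioo a b := ⟨by linarith, by linarith⟩
      exact (h _ hx).1 (by rw [hr0, hs]; ring)
    have hs : s = -(r*b) := by linarith
    obtain ⟨t, ht0, htε, htM⟩ := exists_small_t (b-a) D (r^2) (ω b - p/r)
      (by linarith) hD (by positivity)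
    have hx : b - t ∈ Set.Ioo a b := ⟨by linarith, by linarith⟩
    have hval := (h _ hx).2
    have hden : r*(b-t)+s = -(r*t) := by rw [hs]; ring
    have hnum : p*(b-t)+q = -(p*t) - D/r := by
      have hq : r*(p*b+q) = -D := by rw [hDdef, hs]; ring
      field_simp
      nlinarith [hq]
    have hω : ω (b-t) = p/r + D/(r^2*t) := by
      rw [hval, hden, hnum]
      rw [div_eq_iff (by simp [hr, ne_of_gt ht0] : -(r*t) ≠ 0)]
      field_simp
      ring
    have h1 : ω (b-t) < ω b := hmono (by linarith)
    rw [hω] at h1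
    linarith
  -- continuity facts
  have hcω : Continuous ω := hC1.continuous
  have hdc : Continuous (deriv ω) := hC1.continuous_deriv le_rfl
  set f : ℝ → ℝ := fun x => (p*x+q)/(r*x+s) with hf
  have hIooI : Set.Ioo a b ∈ 𝓝[>] a := Ioo_mem_nhdsGT_of_mem ⟨le_refl a, hab⟩
  have hIooI' : Set.Ioo a b ∈ 𝓝[<] b := Ioo_mem_nhdsLT_of_mem ⟨hab, le_refl b⟩
  -- values at endpoints
  have hlin : Continuous (fun x : ℝ => p*x+q) := by continuity
  have hlin2 : Continuous (fun x : ℝ => r*x+s) := by continuity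
  have hfa : ω a = f a := by
    have k1 : Tendsto ω (𝓝[>] a) (𝓝 (ω a)) :=
      (hcω.continuousAt).tendsto.mono_left nhdsWithin_le_nhds
    have k2 : Tendsto ω (𝓝[>] a) (𝓝 (f a)) := by
      have hfc : ContinuousAt f a := (hlin.continuousAt).div (hlin2.continuousAt) hra
      refine Tendsto.congr' ?_ (hfc.tendsto.mono_left nhdsWithin_le_nhds)
      filter_upwards [hIooI] with x hx using ((h x hx).2).symm
    exact tendsto_nhds_unique k1 k2
  have hfb : ω b = f b := by
    have k1 : Tendsto ω (𝓝[<] b) (𝓝 (ω b)) :=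
      (hcω.continuousAt).tendsto.mono_left nhdsWithin_le_nhds
    have k2 : Tendsto ω (𝓝[<] b) (𝓝 (f b)) := by
      have hfc : ContinuousAt f b := (hlin.continuousAt).div (hlin2.continuousAt) hrb
      refine Tendsto.congr' ?_ (hfc.tendsto.mono_left nhdsWithin_le_nhds)
      filter_upwards [hIooI'] with x hx using ((h x hx).2).symm
    exact tendsto_nhds_unique k1 k2
  -- derivative in the interior
  have hderiv_int : ∀ x ∈ Set.Ioo a b, deriv ω x = D / (r*x+s)^2 := by
    intro x hx
    have hne := (h x hx).1
    have hev : ω =ᶠ[𝓝 x] f := by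
      filter_upwards [Ioo_mem_nhds hx.1 hx.2] with y hy using (h y hy).2
    have h1 : HasDerivAt (fun y : ℝ => p*y+q) p x := by
      simpa using ((hasDerivAt_id x).const_mul p).add_const q
    have h2 : HasDerivAt (fun y : ℝ => r*y+s) r x := by
      simpa using ((hasDerivAt_id x).const_mul r).add_const s
    have hf' : HasDerivAt f ((p*(r*x+s) - (p*x+q)*r)/(r*x+s)^2) x := h1.div h2 hne
    rw [hev.deriv_eq, hf'.deriv]
    congr 1
    rw [hDdef]; ring
  -- derivatives at endpoints
  have hga : ContinuousAt (fun x : ℝ => D / (r*x+s)^2) a :=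
    continuousAt_const.div ((hlin2.continuousAt).pow 2) (pow_ne_zero 2 hra)
  have hgb : ContinuousAt (fun x : ℝ => D / (r*x+s)^2) b :=
    continuousAt_const.div ((hlin2.continuousAt).pow 2) (pow_ne_zero 2 hrb)
  have hda : deriv ω a = D / (r*a+s)^2 := by
    have k1 : Tendsto (deriv ω) (𝓝[>] a) (𝓝 (deriv ω a)) :=
      (hdc.continuousAt).tendsto.mono_left nhdsWithin_le_nhds
    have k2 : Tendsto (deriv ω) (𝓝[>] a) (𝓝 (D / (r*a+s)^2)) := by
      refine Tendsto.congr' ?_ (hga.tendsto.mono_left nhdsWithin_le_nhds)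
      filter_upwards [hIooI] with x hx using (hderiv_int x hx).symm
    exact tendsto_nhds_unique k1 k2
  have hdb : deriv ω b = D / (r*b+s)^2 := by
    have k1 : Tendsto (deriv ω) (𝓝[<] b) (𝓝 (deriv ω b)) :=
      (hdc.continuousAt).tendsto.mono_left nhdsWithin_le_nhds
    have k2 : Tendsto (deriv ω) (𝓝[<] b) (𝓝 (D / (r*b+s)^2)) := by
      refine Tendsto.congr' ?_ (hgb.tendsto.mono_left nhdsWithin_le_nhds)
      filter_upwards [hIooI'] with x hx using (hderiv_int x hx).symm
    exact tendsto_nhds_unique k1 k2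
  -- final algebraic identity
  rw [hfa, hfb, hda, hdb, hf]
  have hrb' : b*r+s ≠ 0 := by rwa [mul_comm]
  field_simp
  rw [hDdef]
  ring

theorem modulus_symmetry_four_vertices
    (x₂ y₂ y₃ : ℝ) (hx₂ : x₂ ∈ Set.Ioo (0 : ℝ) 1) (hy₂ : 0 < y₂) (hy₂₃ : y₂ < y₃)
    (ω : ℝ → ℝ) (hmono : StrictMono ω) (hsurj : Function.Surjective ω)
    (hC1 : ContDiff ℝ 1 ω)
    (hleft : ∃ b : ℝ, ∀ x : ℝ, x < 0 → ω x = x + b)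
    (hright : ∃ b : ℝ, ∀ x : ℝ, 1 < x → ω x = x + b)
    (hmid1 : ∃ p q r s : ℝ, p * s - q * r > 0 ∧
      ∀ x ∈ Set.Ioo (0 : ℝ) x₂, r * x + s ≠ 0 ∧ ω x = (p * x + q) / (r * x + s))
    (hmid2 : ∃ p q r s : ℝ, p * s - q * r > 0 ∧
      ∀ x ∈ Set.Ioo x₂ (1 : ℝ), r * x + s ≠ 0 ∧ ω x = (p * x + q) / (r * x + s))
    (h0 : ω 0 = 0) (hx₂v : ω x₂ = y₂) (h1 : ω 1 = y₃) :
    x₂ = y₂ / y₃ := by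
  obtain ⟨hx₂0, hx₂1⟩ := hx₂
  have hdc : Continuous (deriv ω) := hC1.continuous_deriv le_rfl
  -- deriv ω 0 = 1
  have hd0 : deriv ω 0 = 1 := by
    obtain ⟨c, hc⟩ := hleft
    have hint : ∀ x : ℝ, x < 0 → deriv ω x = 1 := by
      intro x hx
      have hev : ω =ᶠ[𝓝 x] (fun y => y + c) := by
        filter_upwards [Iio_mem_nhds hx] with y hy using hc y hy
      rw [hev.deriv_eq]; simp
    have k1 : Tendsto (deriv ω) (𝓝[<] (0:ℝ)) (𝓝 (deriv ω 0)) :=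
      (hdc.continuousAt).tendsto.mono_left nhdsWithin_le_nhds
    have k2 : Tendsto (deriv ω) (𝓝[<] (0:ℝ)) (𝓝 1) := by
      refine Tendsto.congr' ?_ tendsto_const_nhds
      filter_upwards [self_mem_nhdsWithin] with x hx using (hint x hx).symm
    exact tendsto_nhds_unique k1 k2
  -- deriv ω 1 = 1
  have hd1 : deriv ω 1 = 1 := by
    obtain ⟨c, hc⟩ := hright
    have hint : ∀ x : ℝ, 1 < x → deriv ω x = 1 := by
      intro x hx
      have hev : ω =ᶠ[𝓝 x] (fun y => y + c) := by
        filter_upwards [Ioi_mem_nhds hx] with y hy using hc y hy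
      rw [hev.deriv_eq]; simp
    have k1 : Tendsto (deriv ω) (𝓝[>] (1:ℝ)) (𝓝 (deriv ω 1)) :=
      (hdc.continuousAt).tendsto.mono_left nhdsWithin_le_nhds
    have k2 : Tendsto (deriv ω) (𝓝[>] (1:ℝ)) (𝓝 1) := by
      refine Tendsto.congr' ?_ tendsto_const_nhds
      filter_upwards [self_mem_nhdsWithin] with x hx using (hint x hx).symm
    exact tendsto_nhds_unique k1 k2
  obtain ⟨p, q, r, s, hD, hmob⟩ := hmid1
  obtain ⟨p', q', r', s', hD', hmob'⟩ := hmid2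
  have M1 := mobius_piece ω hmono hC1 0 x₂ p q r s hx₂0 hD hmob
  have M2 := mobius_piece ω hmono hC1 x₂ 1 p' q' r' s' hx₂1 hD' hmob'
  rw [h0, hx₂v, hd0] at M1
  rw [hx₂v, h1, hd1] at M2
  -- M1 : (y₂ - 0)^2 = 1 * deriv ω x₂ * (x₂ - 0)^2
  -- M2 : (y₃ - y₂)^2 = deriv ω x₂ * 1 * (1 - x₂)^2
  set d := deriv ω x₂ with hd
  have e1 : y₂^2 = d * x₂^2 := by linear_combination M1
  have e2 : (y₃-y₂)^2 = d * (1-x₂)^2 := by linear_combination M2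
  have hsq : (y₂*(1-x₂))^2 = ((y₃-y₂)*x₂)^2 := by
    linear_combination (1-x₂)^2 * e1 - x₂^2 * e2
  have hA : 0 < y₂*(1-x₂) := mul_pos hy₂ (by linarith)
  have hB : 0 < (y₃-y₂)*x₂ := mul_pos (by linarith) hx₂0
  have hfac : (y₂*(1-x₂) - (y₃-y₂)*x₂) * (y₂*(1-x₂) + (y₃-y₂)*x₂) = 0 := by
    linear_combination hsq
  rcases mul_eq_zero.mp hfac with hz | hz
  · have hy₃ : y₃ ≠ 0 := by linarith
    rw [eq_div_iff hy₃]
    linear_combination -hz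
  · linarith
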